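/- arXiv:1909.13213 — 3 statements merged into one kernel-verified Lean document; each statement's English description precedes it below -/
import Mathlib

section
/- Let i ≥ 1 be an integer and let (X_m)_{m≥1} be i.i.d. uniform on {1,…,i} with partial sums S_n = X_1 + ⋯ + X_n. Then for every integer k ≥ 1, P(∃ n ≥ 1, S_n = k) = Σ_{h=1}^{min(i,k)} Σ_{(x_1,…,x_i)∈ℕ^i, x_1+2x_2+⋯+i·x_i = k−h} ((x_1+⋯+x_i)! / (x_1!⋯x_i!)) · i^{−(x_1+⋯+x_i+1)}. -/
open Finset

namespace HitAux

noncomputable def mult {n : ℕ} (x : Fin n → ℕ) : ℝ :=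
  ((∑ j, x j).factorial : ℝ) / ∏ j, ((x j).factorial : ℝ)

def Wset (i N : ℕ) : Finset (Fin i → ℕ) :=
  (Fintype.piFinset fun _ : Fin i => Finset.range (N + 1)).filter
    fun x => ∑ j : Fin i, (j.1 + 1) * x j = N

def Tset (i n N : ℕ) : Finset (Fin n → ℕ) :=
  (Fintype.piFinset fun _ : Fin n => Finset.Icc 1 i).filter fun f => ∑ j, f j = N

def cnt (i n N : ℕ) : ℕ := (Tset i n N).card

noncomputable def Afun (i N : ℕ) : ℝ :=
  ∑ n ∈ Finset.range (N + 1), (cnt i n N : ℝ) * ((i : ℝ) ^ n)⁻¹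

noncomputable def Bfun (i N : ℕ) : ℝ :=
  ∑ x ∈ Wset i N, mult x * ((i : ℝ) ^ (∑ j, x j))⁻¹

lemma mem_Wset {i N : ℕ} {x : Fin i → ℕ} :
    x ∈ Wset i N ↔ ∑ j : Fin i, (j.1 + 1) * x j = N := by
  constructor
  · exact fun h => (Finset.mem_filter.mp h).2
  · intro h
    refine Finset.mem_filter.mpr ⟨Fintype.mem_piFinset.mpr fun j => ?_, h⟩
    rw [Finset.mem_range, Nat.lt_succ_iff, ← h]
    calc x j ≤ (j.1 + 1) * x j := Nat.le_mul_of_pos_left _ (Nat.succ_pos _)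
      _ ≤ _ := Finset.single_le_sum (f := fun l : Fin i => (l.1 + 1) * x l)
        (fun l _ => Nat.zero_le _) (Finset.mem_univ j)

lemma mem_Tset {i n N : ℕ} {f : Fin n → ℕ} :
    f ∈ Tset i n N ↔ (∀ j, f j ∈ Finset.Icc 1 i) ∧ ∑ j, f j = N := by
  simp [Tset, Fintype.mem_piFinset]

lemma cnt_eq_zero {i n N : ℕ} (h : N < n) : cnt i n N = 0 := by
  rw [cnt, Finset.card_eq_zero, Finset.eq_empty_iff_forall_notMem]
  intro f hf
  obtain ⟨h1, h2⟩ := mem_Tset.mp hf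
  have : (n : ℕ) ≤ ∑ j, f j := by
    calc (n : ℕ) = ∑ _j : Fin n, 1 := by simp
    _ ≤ ∑ j, f j := Finset.sum_le_sum fun j _ => (Finset.mem_Icc.mp (h1 j)).1
  omega

lemma cnt_zero (i N : ℕ) : cnt i 0 N = if N = 0 then 1 else 0 := by
  rw [cnt, Tset]
  split_ifs with h
  · subst h
    rw [Finset.filter_true_of_mem (fun f _ => by simp)]
    rw [Fintype.card_piFinset]; simp
  · rw [Finset.filter_false_of_mem (fun f _ => by simp [h, Ne.symm]), Finset.card_empty]


lemma Icc_min_filter (i N : ℕ) :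
    Finset.Icc 1 (min i N) = (Finset.Icc 1 i).filter (· ≤ N) := by
  ext h; simp [Finset.mem_Icc]; omega

lemma cnt_succ (i n N : ℕ) :
    cnt i (n + 1) N = ∑ h ∈ Finset.Icc 1 (min i N), cnt i n (N - h) := by
  rw [cnt, Finset.card_eq_sum_card_fiberwise
    (f := fun g : Fin (n+1) → ℕ => g (Fin.last n)) (t := Finset.Icc 1 i)
    (fun g hg => (mem_Tset.mp hg).1 _)]
  rw [Icc_min_filter, Finset.sum_filter]
  refine Finset.sum_congr rfl fun h _hh => ?_
  by_cases hN : h ≤ N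
  · rw [if_pos hN, cnt]
    refine Finset.card_bij' (fun g _ => Fin.init g) (fun y _ => Fin.snoc y h) ?_ ?_ ?_ ?_
    · intro g hg
      obtain ⟨hg1, hlast⟩ := Finset.mem_filter.mp hg
      obtain ⟨hmem, hsum⟩ := mem_Tset.mp hg1
      refine mem_Tset.mpr ⟨fun j => hmem j.castSucc, ?_⟩
      rw [Fin.sum_univ_castSucc] at hsum
      simp only [Fin.init]
      omega
    · intro y hy
      obtain ⟨hmem, hsum⟩ := mem_Tset.mp hy
      refine Finset.mem_filter.mpr ⟨mem_Tset.mpr ⟨?_, ?_⟩, by simp⟩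
      · intro j
        refine Fin.lastCases ?_ (fun l => ?_) j
        · simpa using _hh
        · simpa using hmem l
      · rw [Fin.sum_univ_castSucc]
        simp only [Fin.snoc_castSucc, Fin.snoc_last]
        omega
    · intro g hg
      exact (Finset.mem_filter.mp hg).2 ▸ Fin.snoc_init_self g
    · intro y _
      exact Fin.init_snoc (α := fun _ : Fin (n+1) => ℕ) h y
  · rw [if_neg hN, Finset.card_eq_zero, Finset.eq_empty_iff_forall_notMem]
    intro g hg
    obtain ⟨hg1, hlast⟩ := Finset.mem_filter.mp hg
    obtain ⟨_, hsum⟩ := mem_Tset.mp hg1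
    have : g (Fin.last n) ≤ ∑ j, g j :=
      Finset.single_le_sum (fun l _ => Nat.zero_le _) (Finset.mem_univ _)
    omega

lemma Afun_zero (i : ℕ) : Afun i 0 = 1 := by
  simp [Afun, cnt_zero]

lemma Afun_rec {i N : ℕ} (hi : 1 ≤ i) (hN : 1 ≤ N) :
    Afun i N = (i : ℝ)⁻¹ * ∑ h ∈ Finset.Icc 1 (min i N), Afun i (N - h) := by
  have h0 : Afun i N = ∑ n ∈ Finset.range N, (cnt i (n+1) N : ℝ) * ((i:ℝ) ^ (n+1))⁻¹ := by
    rw [Afun, Finset.sum_range_succ']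
    have : cnt i 0 N = 0 := by rw [cnt_zero]; simp; omega
    simp [this]
  rw [h0]
  have h1 : ∀ n, (cnt i (n+1) N : ℝ) = ∑ h ∈ Finset.Icc 1 (min i N), (cnt i n (N - h) : ℝ) := by
    intro n; rw [cnt_succ]; push_cast; ring
  rw [Finset.mul_sum]
  rw [Finset.sum_congr rfl fun n _ => by rw [h1 n, Finset.sum_mul]]
  rw [Finset.sum_comm]
  refine Finset.sum_congr rfl fun h hh => ?_
  simp only [Finset.mem_Icc] at hh
  have hhN : h ≤ N := le_trans hh.2 (min_le_right _ _)
  have hh1 : 1 ≤ h := hh.1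
  rw [Afun, Finset.mul_sum]
  rw [← Finset.sum_subset (Finset.range_subset_range.mpr (by omega : N - h + 1 ≤ N))
    (fun n _ hn => by
      have : N - h < n := by simp at hn ⊢; omega
      rw [cnt_eq_zero this]; simp)]
  refine Finset.sum_congr rfl fun n _ => ?_
  have : ((i:ℝ) ^ (n+1))⁻¹ = (i:ℝ)⁻¹ * ((i:ℝ)^n)⁻¹ := by
    rw [pow_succ]; rw [mul_inv]; ring
  rw [this]; ring


lemma Bfun_zero (i : ℕ) : Bfun i 0 = 1 := by
  have hW : Wset i 0 = {fun _ => 0} := by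
    ext x
    simp only [mem_Wset, Finset.mem_singleton]
    constructor
    · intro h
      funext j
      have := Finset.sum_eq_zero_iff.mp h j (Finset.mem_univ j)
      simpa using this
    · intro h; subst h; simp
  rw [Bfun, hW]
  simp [mult]

lemma sum_update_apply {n : ℕ} {M : Type*} [AddCommMonoid M] (F : Fin n → ℕ → M)
    (x : Fin n → ℕ) (j : Fin n) (v : ℕ) :
    ∑ l, F l (Function.update x j v l)
      = F j v + ∑ l ∈ Finset.univ.erase j, F l (x l) := by
  rw [← Finset.add_sum_erase _ _ (Finset.mem_univ j)]
  simp only [Function.update_self]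
  congr 1
  refine Finset.sum_congr rfl fun l hl => ?_
  rw [Function.update_of_ne (Finset.ne_of_mem_erase hl)]

lemma sum_apply_split {n : ℕ} {M : Type*} [AddCommMonoid M] (F : Fin n → ℕ → M)
    (x : Fin n → ℕ) (j : Fin n) :
    ∑ l, F l (x l) = F j (x j) + ∑ l ∈ Finset.univ.erase j, F l (x l) :=
  (Finset.add_sum_erase _ _ (Finset.mem_univ j)).symm

lemma mult_update {n : ℕ} (x : Fin n → ℕ) (j : Fin n) (b : ℕ) (hb : x j = b + 1) :
    ((∑ l, x l : ℕ) : ℝ) * mult (Function.update x j b) = (x j : ℝ) * mult x := by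
  have hprod : ∀ (y : Fin n → ℕ),
      (∏ l, ((y l).factorial : ℝ)) = ((y j).factorial : ℝ) *
        ∏ l ∈ Finset.univ.erase j, ((y l).factorial : ℝ) :=
    fun y => (Finset.mul_prod_erase _ _ (Finset.mem_univ j)).symm
  have hupd : ∀ l ∈ Finset.univ.erase j,
      ((Function.update x j b l).factorial : ℝ) = ((x l).factorial : ℝ) := by
    intro l hl; rw [Function.update_of_ne (Finset.ne_of_mem_erase hl)]
  set r : ℕ := ∑ l ∈ Finset.univ.erase j, x l with hr
  have hsx : ∑ l, x l = b + 1 + r := by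
    rw [hr, ← Finset.add_sum_erase _ _ (Finset.mem_univ j), hb]
  have hsu : ∑ l, Function.update x j b l = b + r := by
    rw [sum_update_apply (fun _ t => t)]
  set R : ℝ := ∏ l ∈ Finset.univ.erase j, ((x l).factorial : ℝ) with hR
  have hRpos : 0 < R := Finset.prod_pos fun l _ => by positivity
  rw [mult, mult, hprod, hprod, hsx, hsu, hb,
    Finset.prod_congr rfl hupd, Function.update_self, ← hR]
  have e1 : (b + 1 + r).factorial = (b + 1 + r) * (b + r).factorial := by
    have : b + 1 + r = (b + r) + 1 := by omega
    rw [this, Nat.factorial_succ]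
  have e2 : (b + 1).factorial = (b + 1) * b.factorial := Nat.factorial_succ b
  rw [e1, e2]
  have hbf : ((b.factorial : ℝ)) ≠ 0 := by positivity
  have hRne : R ≠ 0 := ne_of_gt hRpos
  push_cast
  field_simp

lemma mult_decomp {n : ℕ} (x : Fin n → ℕ) (hx : ∑ j, x j ≠ 0) :
    mult x = ∑ j ∈ Finset.univ.filter (fun j => x j ≠ 0),
      mult (Function.update x j (x j - 1)) := by
  have hs : ((∑ j, x j : ℕ) : ℝ) ≠ 0 := by
    exact_mod_cast hx
  refine mul_left_cancel₀ hs ?_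
  rw [Finset.mul_sum]
  have : ∀ j ∈ Finset.univ.filter (fun j => x j ≠ 0),
      ((∑ l, x l : ℕ) : ℝ) * mult (Function.update x j (x j - 1)) = (x j : ℝ) * mult x := by
    intro j hj
    have hj' : x j ≠ 0 := (Finset.mem_filter.mp hj).2
    obtain ⟨b, hb⟩ : ∃ b, x j = b + 1 := ⟨x j - 1, by omega⟩
    have := mult_update x j b hb
    rwa [show x j - 1 = b by omega]
  rw [Finset.sum_congr rfl this, ← Finset.sum_mul]
  have : ∑ j ∈ Finset.univ.filter (fun j => x j ≠ 0), (x j : ℝ)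
      = ((∑ j, x j : ℕ) : ℝ) := by
    have h2 : ∑ j ∈ Finset.univ.filter (fun j => x j ≠ 0), x j = ∑ j, x j :=
      Finset.sum_filter_ne_zero _
    exact_mod_cast congrArg (Nat.cast : ℕ → ℝ) h2
  rw [this]


lemma Bfun_rec {i N : ℕ} (hN : 1 ≤ N) :
    Bfun i N = (i:ℝ)⁻¹ * ∑ h ∈ Finset.Icc 1 (min i N), Bfun i (N - h) := by
  classical
  set G : ℕ → ℝ := fun h => ∑ y ∈ Wset i (N - h), mult y * ((i:ℝ) ^ ((∑ l, y l) + 1))⁻¹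
    with hG
  have hstep1 : Bfun i N = ∑ x ∈ Wset i N, ∑ j : Fin i,
      (if x j ≠ 0 then mult (Function.update x j (x j - 1)) * ((i:ℝ) ^ (∑ l, x l))⁻¹
        else 0) := by
    refine Finset.sum_congr rfl fun x hx => ?_
    have hxw := mem_Wset.mp hx
    have hxs : ∑ j, x j ≠ 0 := by
      intro h0
      have hall : ∀ j ∈ Finset.univ, (j.1 + 1) * x j = 0 := fun j _ => by
        have := Finset.sum_eq_zero_iff.mp h0 j (Finset.mem_univ j)
        simp [this]
      rw [Finset.sum_eq_zero hall] at hxw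
      omega
    rw [mult_decomp x hxs, Finset.sum_mul, Finset.sum_filter]
  have hstep2 : ∀ j : Fin i,
      (∑ x ∈ Wset i N,
        if x j ≠ 0 then mult (Function.update x j (x j - 1)) * ((i:ℝ) ^ (∑ l, x l))⁻¹
          else 0)
      = if j.1 + 1 ≤ N then G (j.1 + 1) else 0 := by
    intro j
    rw [← Finset.sum_filter]
    by_cases hj : j.1 + 1 ≤ N
    · rw [if_pos hj, hG]
      refine Finset.sum_bij' (fun x _ => Function.update x j (x j - 1))
        (fun y _ => Function.update y j (y j + 1)) ?_ ?_ ?_ ?_ ?_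
      · intro x hx
        obtain ⟨hxW, hxj⟩ := Finset.mem_filter.mp hx
        have hsum := mem_Wset.mp hxW
        obtain ⟨b, hb⟩ : ∃ b, x j = b + 1 := ⟨x j - 1, by omega⟩
        rw [sum_apply_split (fun l t => (l.1 + 1) * t) x j] at hsum
        refine mem_Wset.mpr ?_
        rw [sum_update_apply (fun l t => (l.1 + 1) * t) x j]
        rw [hb] at hsum ⊢
        simp only [Nat.add_sub_cancel]
        rw [Nat.mul_succ] at hsum
        omega
      · intro y hy
        have hsum := mem_Wset.mp hy
        rw [sum_apply_split (fun l t => (l.1 + 1) * t) y j] at hsum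
        refine Finset.mem_filter.mpr ⟨mem_Wset.mpr ?_, by simp⟩
        rw [sum_update_apply (fun l t => (l.1 + 1) * t) y j]
        rw [Nat.mul_succ]
        omega
      · intro x hx
        obtain ⟨_, hxj⟩ := Finset.mem_filter.mp hx
        simp only [Function.update_self, Function.update_idem]
        rw [show x j - 1 + 1 = x j by omega, Function.update_eq_self]
      · intro y _
        simp only [Function.update_self, Function.update_idem, Nat.add_sub_cancel,
          Function.update_eq_self]
      · intro x hx
        obtain ⟨_, hxj⟩ := Finset.mem_filter.mp hx
        have : ∑ l, x l = (∑ l, Function.update x j (x j - 1) l) + 1 := by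
          rw [sum_update_apply (fun _ t => t) x j, sum_apply_split (fun _ t => t) x j]
          omega
        rw [this]
    · rw [if_neg hj]
      rw [Finset.filter_false_of_mem, Finset.sum_empty]
      intro x hx
      have hsum := mem_Wset.mp hx
      intro hxj
      have h1 : (j.1 + 1) * x j ≤ N := by
        rw [← hsum]
        exact Finset.single_le_sum (f := fun l : Fin i => (l.1 + 1) * x l)
          (fun l _ => Nat.zero_le _) (Finset.mem_univ j)
      have h2 : j.1 + 1 ≤ (j.1 + 1) * x j := Nat.le_mul_of_pos_right _ (by omega)
      omega
  have hstep3 : ∑ j : Fin i, (if j.1 + 1 ≤ N then G (j.1 + 1) else 0)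
      = ∑ h ∈ Finset.Icc 1 (min i N), G h := by
    rw [← Finset.sum_filter]
    refine Finset.sum_bij' (fun j _ => j.1 + 1)
      (fun h hh => (⟨h - 1, by simp only [Finset.mem_Icc] at hh; omega⟩ : Fin i))
      ?_ ?_ ?_ ?_ ?_
    · intro j hj
      simp only [Finset.mem_filter, Finset.mem_univ, true_and] at hj
      simp only [Finset.mem_Icc]
      exact ⟨by omega, le_min (by omega) hj⟩
    · intro h hh
      simp only [Finset.mem_Icc] at hh
      simp only [Finset.mem_filter, Finset.mem_univ, true_and]
      omega
    · intro j _; simp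
    · intro h hh
      simp only [Finset.mem_Icc] at hh
      simp only
      omega
    · intro j _; rfl
  have hstep4 : ∀ h, G h = (i:ℝ)⁻¹ * Bfun i (N - h) := by
    intro h
    rw [hG, Bfun, Finset.mul_sum]
    refine Finset.sum_congr rfl fun y _ => ?_
    rw [pow_succ, mul_inv]
    ring
  rw [hstep1, Finset.sum_comm, Finset.sum_congr rfl fun j _ => hstep2 j, hstep3,
    Finset.sum_congr rfl fun h _ => hstep4 h, ← Finset.mul_sum]

lemma Afun_eq_Bfun {i : ℕ} (hi : 1 ≤ i) : ∀ N, Afun i N = Bfun i N := by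
  intro N
  induction N using Nat.strong_induction_on with
  | _ N ih =>
    rcases Nat.eq_zero_or_pos N with h | h
    · subst h; rw [Afun_zero, Bfun_zero]
    · rw [Afun_rec hi h, Bfun_rec h]
      congr 1
      refine Finset.sum_congr rfl fun m hm => ?_
      simp only [Finset.mem_Icc] at hm
      exact ih (N - m) (by omega)


lemma Afun_shift {i k : ℕ} (hk : 1 ≤ k) :
    Afun i k = ∑ n ∈ Finset.range k, (cnt i (n+1) k : ℝ) * ((i:ℝ) ^ (n+1))⁻¹ := by
  rw [Afun, Finset.sum_range_succ']
  have : cnt i 0 k = 0 := by rw [cnt_zero]; simp; omega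
  simp [this]

lemma bridge {i k : ℕ} (hi : 1 ≤ i) (hk : 1 ≤ k) :
    ∑ h ∈ Finset.Icc 1 (min i k), ∑ x ∈ Wset i (k - h),
      mult x * ((i:ℝ) ^ ((∑ j, x j) + 1))⁻¹ = Afun i k := by
  rw [Afun_rec hi hk, Finset.mul_sum]
  refine Finset.sum_congr rfl fun h _ => ?_
  rw [Afun_eq_Bfun hi, Bfun, Finset.mul_sum]
  refine Finset.sum_congr rfl fun y _ => ?_
  rw [pow_succ, mul_inv]
  ring

end HitAux

open MeasureTheory ProbabilityTheory Finset Real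

set_option maxHeartbeats 1000000 in
/-- Hitting probability of level `k` for the random walk with i.i.d. steps uniform on
`{1, …, i}` (equivalently, for the Poisson process of order `i`), expressed as the double
sum `∑_{h=1}^{min(i,k)} ∑_{x ∈ ℕ^i, ∑ j x_j = k-h} ((x_1+⋯+x_i)!/(x_1!⋯x_i!)) i^{-(x_1+⋯+x_i+1)}`. -/
theorem hitting_probability_uniform_walk_sum_formula
    {Ω : Type*} [MeasurableSpace Ω] (P : Measure Ω) [IsProbabilityMeasure P]
    (i : ℕ) (hi : 1 ≤ i)
    (X : ℕ → Ω → ℕ)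
    (hXmeas : ∀ m, Measurable (X m))
    (hXindep : iIndepFun X P)
    (hXunif : ∀ m x, P {ω | X m ω = x} =
      if x ∈ Finset.Icc 1 i then (1 : ENNReal) / i else 0)
    (S : ℕ → Ω → ℕ)
    (hS : ∀ n ω, S n ω = ∑ m ∈ Finset.range n, X m ω)
    (k : ℕ) (hk : 1 ≤ k) :
    P {ω | ∃ n ≥ 1, S n ω = k} =
      ENNReal.ofReal
        (∑ h ∈ Finset.Icc 1 (min i k),
          ∑ x ∈ (Fintype.piFinset fun _ : Fin i => Finset.range (k - h + 1)).filter
              (fun x => ∑ j : Fin i, (j.1 + 1) * x j = k - h),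
            (((∑ j : Fin i, x j).factorial : ℝ) / ∏ j : Fin i, ((x j).factorial : ℝ)) *
              ((i : ℝ) ^ ((∑ j : Fin i, x j) + 1))⁻¹) := by
  classical
  set E : ℕ → Set Ω := fun n => {ω | ∑ m ∈ Finset.range n, X m ω = k} with hE
  have hEmeas : ∀ n, MeasurableSet (E n) := fun n =>
    (Finset.measurable_sum (Finset.range n) fun m _ => hXmeas m) (measurableSet_singleton k)
  have hset : {ω | ∃ n ≥ 1, S n ω = k} = ⋃ n : ℕ, E (n + 1) := by
    ext ω
    simp only [Set.mem_setOf_eq, Set.mem_iUnion, hE, hS]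
    constructor
    · rintro ⟨n, hn1, hnk⟩
      exact ⟨n - 1, by rwa [Nat.sub_add_cancel hn1]⟩
    · rintro ⟨n, hn⟩
      exact ⟨n + 1, by omega, hn⟩
  set Z : Set Ω := ⋃ m, {ω | X m ω = 0} with hZv
  have hZmeas : MeasurableSet Z :=
    MeasurableSet.iUnion fun m => hXmeas m (measurableSet_singleton 0)
  have hZ0 : P Z = 0 := by
    refine measure_iUnion_null fun m => ?_
    rw [hXunif m 0]
    simp
  have hPdiff : ∀ A : Set Ω, P (A \ Z) = P A := fun A => measure_diff_null hZ0
  have hXpre : ∀ m x, P (X m ⁻¹' {x}) =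
      if x ∈ Finset.Icc 1 i then (1 : ENNReal) / i else 0 := fun m x => hXunif m x
  -- compute P (E n)
  have hEval : ∀ n, P (E n) = (HitAux.cnt i n k : ENNReal) * ((i : ENNReal) ^ n)⁻¹ := by
    intro n
    set g : (Fin n → ℕ) → ℕ → ℕ := fun f m => if h : m < n then f ⟨m, h⟩ else 0 with hg
    set C : (Fin n → ℕ) → Set Ω := fun f => ⋂ m ∈ Finset.range n, X m ⁻¹' {g f m} with hC
    have hgf : ∀ (f : Fin n → ℕ) (j : Fin n), g f j.1 = f j := by
      intro f j
      simp only [hg, j.isLt, dif_pos]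
    have hCmem : ∀ (f : Fin n → ℕ) (ω : Ω), ω ∈ C f ↔ ∀ j : Fin n, X j.1 ω = f j := by
      intro f ω
      simp only [hC, Set.mem_iInter, Set.mem_preimage, Set.mem_singleton_iff,
        Finset.mem_range]
      constructor
      · intro hm j
        rw [hm j.1 j.isLt, hgf]
      · intro hj m hm
        exact (hj ⟨m, hm⟩).trans (hgf f ⟨m, hm⟩).symm
    have hCmeas : ∀ f, MeasurableSet (C f) := fun f =>
      MeasurableSet.biInter (Finset.range n).countable_toSet
        (fun m _ => hXmeas m (measurableSet_singleton _))
    set D : Finset (Fin n → ℕ) :=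
      (Fintype.piFinset fun _ : Fin n => Finset.range (k + 1)).filter
        (fun f => ∑ j, f j = k) with hD
    have hEdec : E n = ⋃ f ∈ D, C f := by
      ext ω
      simp only [hE, Set.mem_setOf_eq, Set.mem_iUnion]
      constructor
      · intro hω
        refine ⟨fun j => X j.1 ω, ?_, ?_⟩
        · refine Finset.mem_filter.mpr ⟨Fintype.mem_piFinset.mpr fun j => ?_, ?_⟩
          · rw [Finset.mem_range, Nat.lt_succ_iff, ← hω]
            exact Finset.single_le_sum (f := fun m => X m ω)
              (fun m _ => Nat.zero_le _) (Finset.mem_range.mpr j.isLt)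
          · rw [← Finset.sum_range fun m => X m ω]
            exact hω
        · exact (hCmem _ ω).mpr fun j => rfl
      · rintro ⟨f, hfD, hωC⟩
        obtain ⟨_, hfsum⟩ := Finset.mem_filter.mp hfD
        have := (hCmem f ω).mp hωC
        rw [Finset.sum_range fun m => X m ω]
        rw [Finset.sum_congr rfl fun j _ => this j]
        exact hfsum
    have hCdisj : (↑D : Set (Fin n → ℕ)).PairwiseDisjoint C := by
      intro f _ f' _ hff
      refine Set.disjoint_left.mpr fun ω hω hω' => hff ?_
      funext j
      rw [← (hCmem f ω).mp hω j, ← (hCmem f' ω).mp hω' j]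
    have hPC : ∀ f : Fin n → ℕ, P (C f) =
        if (∀ j : Fin n, f j ∈ Finset.Icc 1 i) then ((i : ENNReal))⁻¹ ^ n else 0 := by
      intro f
      have hind : P (C f) = ∏ m ∈ Finset.range n, P (X m ⁻¹' {g f m}) := by
        rw [hC]
        exact hXindep.meas_biInter fun m _ =>
          ⟨{g f m}, measurableSet_singleton _, rfl⟩
      rw [hind]
      by_cases hall : ∀ j : Fin n, f j ∈ Finset.Icc 1 i
      · rw [if_pos hall]
        rw [Finset.prod_congr rfl fun m hm => ?_]
        · rw [Finset.prod_const, Finset.card_range]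
        · rw [hXpre]
          have hmn : m < n := Finset.mem_range.mp hm
          rw [if_pos (by rw [show g f m = f ⟨m, hmn⟩ from by simp [hg, hmn]]; exact hall _)]
          rw [one_div]
      · rw [if_neg hall]
        push_neg at hall
        obtain ⟨j, hj⟩ := hall
        refine Finset.prod_eq_zero (Finset.mem_range.mpr j.isLt) ?_
        rw [hXpre, if_neg]
        rwa [hgf]
    have hDT : D.filter (fun f => ∀ j : Fin n, f j ∈ Finset.Icc 1 i)
        = HitAux.Tset i n k := by
      ext f
      simp only [hD, Finset.mem_filter, Fintype.mem_piFinset, HitAux.mem_Tset,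
        Finset.mem_range, Nat.lt_succ_iff]
      constructor
      · rintro ⟨⟨_, hsum⟩, hic⟩
        exact ⟨hic, hsum⟩
      · rintro ⟨hic, hsum⟩
        refine ⟨⟨fun j => ?_, hsum⟩, hic⟩
        rw [← hsum]
        exact Finset.single_le_sum (fun l _ => Nat.zero_le _) (Finset.mem_univ j)
    rw [hEdec, measure_biUnion_finset hCdisj (fun f _ => hCmeas f)]
    rw [Finset.sum_congr rfl fun f _ => hPC f, Finset.sum_ite, Finset.sum_const,
      Finset.sum_const, smul_zero, add_zero, hDT]
    rw [HitAux.cnt, nsmul_eq_mul, ENNReal.inv_pow]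
  -- disjointness after removing Z
  have hdisj : Pairwise (Function.onFun Disjoint fun n => E (n + 1) \ Z) := by
    have key : ∀ a b : ℕ, a < b → Disjoint (E (a + 1) \ Z) (E (b + 1) \ Z) := by
      intro a b hab
      refine Set.disjoint_left.mpr ?_
      rintro ω ⟨ha, hz⟩ ⟨hb, _⟩
      have hpos : ∀ m, 1 ≤ X m ω := by
        intro m
        by_contra hm
        exact hz (Set.mem_iUnion.mpr ⟨m, by simp only [Set.mem_setOf_eq]; omega⟩)
      have hsa : ∑ m ∈ Finset.range (a + 1), X m ω = k := ha
      have hsb : ∑ m ∈ Finset.range (b + 1), X m ω = k := hb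
      have hsplit : ∑ m ∈ Finset.range (a + 1), X m ω
          + ∑ m ∈ Finset.Ico (a + 1) (b + 1), X m ω
          = ∑ m ∈ Finset.range (b + 1), X m ω := by
        simp only [Finset.range_eq_Ico]
        exact Finset.sum_Ico_consecutive _ (by omega) (by omega)
      have hpos2 : 0 < ∑ m ∈ Finset.Ico (a + 1) (b + 1), X m ω :=
        Finset.sum_pos (fun m _ => hpos m) ⟨a + 1, Finset.mem_Ico.mpr ⟨le_refl _, by omega⟩⟩
      omega
    intro a b hab
    rcases lt_or_gt_of_ne hab with h | h
    · exact key a b h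
    · exact (key b a h).symm
  -- main computation
  rw [hset, ← hPdiff (⋃ n : ℕ, E (n + 1)), Set.iUnion_diff,
    measure_iUnion hdisj (fun n => (hEmeas _).diff hZmeas)]
  rw [tsum_congr fun n => hPdiff (E (n + 1))]
  rw [tsum_congr fun n => hEval (n + 1)]
  rw [tsum_eq_sum (s := Finset.range k) (fun n hn => by
    rw [HitAux.cnt_eq_zero (by simp only [Finset.mem_range, not_lt] at hn; omega)]
    simp)]
  -- identify RHS with the combinatorial sum
  have hrw : (∑ h ∈ Finset.Icc 1 (min i k),
          ∑ x ∈ (Fintype.piFinset fun _ : Fin i => Finset.range (k - h + 1)).filter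
              (fun x => ∑ j : Fin i, (j.1 + 1) * x j = k - h),
            (((∑ j : Fin i, x j).factorial : ℝ) / ∏ j : Fin i, ((x j).factorial : ℝ)) *
              ((i : ℝ) ^ ((∑ j : Fin i, x j) + 1))⁻¹)
      = ∑ n ∈ Finset.range k, (HitAux.cnt i (n+1) k : ℝ) * ((i:ℝ) ^ (n+1))⁻¹ := by
    rw [← HitAux.Afun_shift hk, ← HitAux.bridge hi hk]
    rfl
  rw [hrw, ENNReal.ofReal_sum_of_nonneg (fun n _ => by positivity)]
  refine Finset.sum_congr rfl fun n _ => ?_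
  have hipos : (0:ℝ) < (i:ℝ) ^ (n+1) := by positivity
  rw [ENNReal.ofReal_mul (by positivity), ENNReal.ofReal_natCast,
    ENNReal.ofReal_inv_of_pos hipos, ENNReal.ofReal_pow (by positivity),
    ENNReal.ofReal_natCast]
end

section
/- Let λ > 0 and let i ≥ 1 be an integer. Let (B_m)_{m≥1} be i.i.d. ℕ-valued random variables with P(B_m = n) = Σ_{(x_1,…,x_i)∈ℕ^i, x_1+2x_2+⋯+i·x_i = n} e^{−iλ} λ^{x_1+⋯+x_i}/(x_1!⋯x_i!) (the Poisson distribution of order i with parameter λ), and set V_n = B_1 + ⋯ + B_n. Then P(∃ n ≥ 1, V_n = 1) = λ e^{−iλ}/(1 − e^{−iλ}), and this probability is strictly less than 1. -/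
open MeasureTheory ProbabilityTheory Finset Real

lemma hit_aux_filter0 (i : ℕ) :
    (Fintype.piFinset fun _ : Fin i => Finset.range (0 + 1)).filter
      (fun x => ∑ j : Fin i, (j.1 + 1) * x j = 0) = {fun _ => 0} := by
  ext x
  simp only [mem_filter, Fintype.mem_piFinset, mem_range, mem_singleton, funext_iff]
  constructor
  · rintro ⟨h, -⟩ a; have := h a; omega
  · intro h; simp [h]

lemma hit_aux_filter1 (i : ℕ) (hi : 1 ≤ i) :
    (Fintype.piFinset fun _ : Fin i => Finset.range (1 + 1)).filter
      (fun x => ∑ j : Fin i, (j.1 + 1) * x j = 1) =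
      {fun j : Fin i => if j.1 = 0 then 1 else 0} := by
  haveI : NeZero i := ⟨by omega⟩
  ext x
  simp only [mem_filter, Fintype.mem_piFinset, mem_range, mem_singleton, funext_iff]
  constructor
  · rintro ⟨-, hs⟩ a
    have hterm : ∀ j : Fin i, (j.1 + 1) * x j ≤ 1 := by
      intro j
      have := Finset.single_le_sum (f := fun j : Fin i => (j.1 + 1) * x j)
        (fun _ _ => Nat.zero_le _) (Finset.mem_univ j)
      rw [hs] at this; exact this
    have hzero : ∀ j : Fin i, j.1 ≠ 0 → x j = 0 := by
      intro j hj; have := hterm j; nlinarith [Nat.pos_of_ne_zero hj]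
    by_cases ha : a.1 = 0
    · have : ∑ j : Fin i, (j.1 + 1) * x j = x a := by
        rw [Finset.sum_eq_single a]
        · simp [ha]
        · intro b _ hb
          have hb0 : b.1 ≠ 0 := fun h => hb (Fin.ext (h.trans ha.symm))
          simp [hzero b hb0]
        · simp
      simp [ha]; omega
    · simp [ha, hzero a ha]
  · intro h
    have hx : x = fun j : Fin i => if j.1 = 0 then 1 else 0 := funext h
    subst hx
    constructor
    · intro a; dsimp only; split <;> omega
    · rw [Finset.sum_eq_single (0 : Fin i)]
      · simp
      · intro b _ hb
        simp [show (b : ℕ) ≠ 0 from fun h => hb (Fin.ext (by simp [h]))]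
      · simp

/-- For the random walk `V_n = B_1 + ⋯ + B_n` whose i.i.d. steps follow the Poisson
distribution of order `i` with parameter `λ`, the probability of hitting level `1` equals
`λ e^{-iλ}/(1 - e^{-iλ})`, and it is strictly less than `1`. -/
theorem hitting_level_one_order_i_walk
    {Ω : Type*} [MeasurableSpace Ω] (P : Measure Ω) [IsProbabilityMeasure P]
    (lam : ℝ) (hlam : 0 < lam) (i : ℕ) (hi : 1 ≤ i)
    (B : ℕ → Ω → ℕ)
    (hBmeas : ∀ m, Measurable (B m))
    (hBindep : iIndepFun B P)
    (hBpmf : ∀ m n, P {ω | B m ω = n} =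
      ENNReal.ofReal
        (∑ x ∈ (Fintype.piFinset fun _ : Fin i => Finset.range (n + 1)).filter
            (fun x => ∑ j : Fin i, (j.1 + 1) * x j = n),
          Real.exp (-(i * lam)) * lam ^ (∑ j : Fin i, x j) /
            ∏ j : Fin i, ((x j).factorial : ℝ)))
    (V : ℕ → Ω → ℕ)
    (hV : ∀ n ω, V n ω = ∑ m ∈ Finset.range n, B m ω) :
    P {ω | ∃ n ≥ 1, V n ω = 1} =
      ENNReal.ofReal (lam * Real.exp (-(i * lam)) / (1 - Real.exp (-(i * lam)))) ∧
    P {ω | ∃ n ≥ 1, V n ω = 1} < 1 := by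
  haveI : NeZero i := ⟨by omega⟩
  set a : ℝ := Real.exp (-(i * lam)) with ha_def
  have hilam : 0 < (i : ℝ) * lam := by
    have : (1 : ℝ) ≤ i := by exact_mod_cast hi
    nlinarith
  have ha_pos : 0 < a := Real.exp_pos _
  have ha_lt1 : a < 1 := by
    rw [ha_def, Real.exp_lt_one_iff]; linarith
  -- pmf values
  have hp0 : ∀ m, P {ω | B m ω = 0} = ENNReal.ofReal a := by
    intro m
    rw [hBpmf m 0, hit_aux_filter0 i, Finset.sum_singleton]
    simp
  have hp1 : ∀ m, P {ω | B m ω = 1} = ENNReal.ofReal (lam * a) := by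
    intro m
    rw [hBpmf m 1, hit_aux_filter1 i hi, Finset.sum_singleton]
    have hsum : (∑ j : Fin i, if (j : ℕ) = 0 then 1 else 0) = 1 := by
      rw [Finset.sum_eq_single (0 : Fin i)]
      · simp
      · intro b _ hb
        simp [show (b : ℕ) ≠ 0 from fun h => hb (Fin.ext (by simp [h]))]
      · simp
    have hprod : (∏ j : Fin i,
        ((Nat.factorial (if (j : ℕ) = 0 then 1 else 0) : ℕ) : ℝ)) = 1 := by
      apply Finset.prod_eq_one
      intro j _
      split <;> simp
    rw [hsum, hprod]
    ring_nf
  -- the events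
  set A : ℕ → Set Ω := fun k => ⋂ m ∈ Finset.range (k + 1),
    B m ⁻¹' {if m = k then 1 else 0} with hA_def
  have hmemA : ∀ k ω, ω ∈ A k ↔ ∀ m ≤ k, B m ω = if m = k then 1 else 0 := by
    intro k ω
    simp only [hA_def, Set.mem_iInter, Finset.mem_range, Set.mem_preimage,
      Set.mem_singleton_iff]
    constructor
    · intro h m hm; exact h m (by omega)
    · intro h m hm; exact h m (by omega)
  have hAmeas : ∀ k, MeasurableSet (A k) := by
    intro k
    exact MeasurableSet.biInter (Set.to_countable _)
      (fun m _ => (hBmeas m) (measurableSet_singleton _))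
  have hset : {ω | ∃ n ≥ 1, V n ω = 1} = ⋃ k, A k := by
    ext ω
    simp only [Set.mem_setOf_eq, Set.mem_iUnion]
    constructor
    · rintro ⟨n, hn1, hVn⟩
      rw [hV] at hVn
      have hex : ∃ m, B m ω ≠ 0 := by
        by_contra hc
        push_neg at hc
        rw [Finset.sum_eq_zero (fun m _ => hc m)] at hVn
        omega
      obtain ⟨k, hkne, hkmin⟩ : ∃ k, B k ω ≠ 0 ∧ ∀ m < k, B m ω = 0 := by
        refine ⟨Nat.find hex, Nat.find_spec hex, fun m hm => ?_⟩
        have := Nat.find_min hex hm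
        omega
      have hkltn : k < n := by
        by_contra hc
        push_neg at hc
        have : ∑ m ∈ Finset.range n, B m ω = 0 :=
          Finset.sum_eq_zero (fun m hm => hkmin m (lt_of_lt_of_le (Finset.mem_range.mp hm) hc))
        omega
      have hle : B k ω ≤ 1 := by
        calc B k ω ≤ ∑ m ∈ Finset.range n, B m ω :=
              Finset.single_le_sum (f := fun m => B m ω)
                (fun _ _ => Nat.zero_le _) (Finset.mem_range.mpr hkltn)
          _ = 1 := hVn
      refine ⟨k, (hmemA k ω).mpr ?_⟩
      intro m hm
      rcases lt_or_eq_of_le hm with h | h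
      · simp [Nat.ne_of_lt h, hkmin m h]
      · subst h; simp; omega
    · rintro ⟨k, hk⟩
      rw [hmemA] at hk
      refine ⟨k + 1, by omega, ?_⟩
      rw [hV, Finset.sum_range_succ, Finset.sum_eq_zero (fun m hm => by
        have hmk : m < k := Finset.mem_range.mp hm
        have := hk m hmk.le
        simpa [Nat.ne_of_lt hmk] using this)]
      have := hk k le_rfl
      simpa using this
  have hdisj : Pairwise (Function.onFun Disjoint A) := by
    intro k l hkl
    wlog h : k < l generalizing k l
    · exact (this hkl.symm (by omega)).symm
    rw [Function.onFun, Set.disjoint_left]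
    intro ω hωk hωl
    have h1 : B k ω = 1 := by simpa using (hmemA k ω).mp hωk k le_rfl
    have h0 : B k ω = 0 := by
      have := (hmemA l ω).mp hωl k h.le
      simpa [Nat.ne_of_lt h] using this
    omega
  -- probability of each A k
  have hPA : ∀ k, P (A k) = ENNReal.ofReal (lam * a) * (ENNReal.ofReal a) ^ k := by
    intro k
    have := hBindep.meas_biInter (S := Finset.range (k + 1))
      (s := fun m => B m ⁻¹' {if m = k then 1 else 0})
      (fun m _ => ⟨{if m = k then 1 else 0}, measurableSet_singleton _, rfl⟩)
    rw [hA_def]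
    rw [this, Finset.prod_range_succ]
    have heq : ∀ m, B m ⁻¹' {if m = k then 1 else 0} =
        {ω | B m ω = if m = k then 1 else 0} := fun m => rfl
    have hk1 : P (B k ⁻¹' {1}) = ENNReal.ofReal (lam * a) := hp1 k
    simp only [if_true]
    rw [hk1]
    have : ∀ m ∈ Finset.range k, P (B m ⁻¹' {if m = k then 1 else 0}) =
        ENNReal.ofReal a := by
      intro m hm
      rw [Finset.mem_range] at hm
      rw [heq m, if_neg (Nat.ne_of_lt hm)]
      exact hp0 m
    rw [Finset.prod_congr rfl this, Finset.prod_const, Finset.card_range]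
    ring
  have hPU : P {ω | ∃ n ≥ 1, V n ω = 1} =
      ENNReal.ofReal (lam * a) * (1 - ENNReal.ofReal a)⁻¹ := by
    rw [hset, measure_iUnion hdisj hAmeas]
    simp_rw [hPA]
    rw [ENNReal.tsum_mul_left, ENNReal.tsum_geometric]
  have hrhs : ENNReal.ofReal (lam * a / (1 - a)) =
      ENNReal.ofReal (lam * a) * (1 - ENNReal.ofReal a)⁻¹ := by
    rw [ENNReal.ofReal_div_of_pos (by linarith), ENNReal.div_eq_inv_mul,
      ENNReal.ofReal_sub _ ha_pos.le, ENNReal.ofReal_one]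
    ring
  constructor
  · rw [hPU, hrhs]
  · rw [hPU, ← hrhs, ENNReal.ofReal_lt_one, div_lt_one (by linarith)]
    have h1 : lam + 1 < Real.exp lam := Real.add_one_lt_exp hlam.ne'
    have h2 : Real.exp lam ≤ Real.exp ((i : ℝ) * lam) := by
      apply Real.exp_le_exp.mpr
      have : (1 : ℝ) ≤ i := by exact_mod_cast hi
      nlinarith
    have h3 : a * Real.exp ((i : ℝ) * lam) = 1 := by
      rw [ha_def, ← Real.exp_add]; simp
    nlinarith
end

section
/- Let λ > 0 and let i ≥ 1 be an integer. Let (B_m)_{m≥1} be i.i.d. ℕ-valued random variables with P(B_m = n) = Σ_{(x_1,…,x_i)∈ℕ^i, x_1+2x_2+⋯+i·x_i = n} e^{−iλ} λ^{x_1+⋯+x_i}/(x_1!⋯x_i!) (the Poisson distribution of order i with parameter λ), and set V_n = B_1 + ⋯ + B_n. Then for every integer k ≥ 1, P(∃ n ≥ 1, V_n = k) = Σ_{h=1}^{k} [ Σ_{(x_1,…,x_i)∈ℕ^i, x_1+2x_2+⋯+i·x_i = k−h} (λ^{x_1+⋯+x_i}/(x_1!⋯x_i!)) · Σ_{r=0}^∞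 e^{−iλr} r^{x_1+⋯+x_i} ] · [ Σ_{(x_1,…,x_i)∈ℕ^i, x_1+2x_2+⋯+i·x_i = h} e^{−iλ} λ^{x_1+⋯+x_i}/(x_1!⋯x_i!) ]. -/
open MeasureTheory ProbabilityTheory Finset Real

namespace PoissonOrderAux

def w (i : ℕ) (x : Fin i → ℕ) : ℕ := ∑ j : Fin i, (j.1 + 1) * x j

def T (i n : ℕ) : Finset (Fin i → ℕ) :=
  (Fintype.piFinset fun _ : Fin i => Finset.range (n + 1)).filter (fun x => w i x = n)

lemma mem_T {i n : ℕ} {x : Fin i → ℕ} : x ∈ T i n ↔ w i x = n := by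
  constructor
  · exact fun hx => (Finset.mem_filter.mp hx).2
  · intro hx
    refine Finset.mem_filter.mpr ⟨?_, hx⟩
    rw [Fintype.mem_piFinset]
    intro j
    rw [Finset.mem_range, Nat.lt_succ_iff, ← hx]
    calc x j ≤ (j.1 + 1) * x j := Nat.le_mul_of_pos_left _ (Nat.succ_pos _)
      _ ≤ w i x := Finset.single_le_sum (f := fun j => (j.1 + 1) * x j)
          (fun j _ => Nat.zero_le _) (Finset.mem_univ j)

lemma w_add {i : ℕ} (x y : Fin i → ℕ) : w i (x + y) = w i x + w i y := by
  simp [w, mul_add, Finset.sum_add_distrib]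

lemma w_add_sub {i : ℕ} {x z : Fin i → ℕ} (h : ∀ j, x j ≤ z j) :
    w i x + w i (z - x) = w i z := by
  rw [← w_add]
  congr 1
  funext j
  simp [Nat.add_sub_cancel' (h j)]

noncomputable def F (i : ℕ) (t : ℝ) (x : Fin i → ℕ) : ℝ :=
  t ^ (∑ j, x j) / ∏ j, ((x j).factorial : ℝ)

lemma F_eq_prod (i : ℕ) (t : ℝ) (x : Fin i → ℕ) :
    F i t x = ∏ j, t ^ (x j) / ((x j).factorial : ℝ) := by
  rw [F, Finset.prod_div_distrib, Finset.prod_pow_eq_pow_sum]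

lemma F_nonneg {i : ℕ} {t : ℝ} (ht : 0 ≤ t) (x : Fin i → ℕ) : 0 ≤ F i t x := by
  rw [F_eq_prod]
  exact Finset.prod_nonneg fun j _ => div_nonneg (pow_nonneg ht _) (Nat.cast_nonneg _)

noncomputable def p (i : ℕ) (t : ℝ) (n : ℕ) : ℝ := ∑ x ∈ T i n, F i t x

lemma p_nonneg {i : ℕ} {t : ℝ} (ht : 0 ≤ t) (n : ℕ) : 0 ≤ p i t n :=
  Finset.sum_nonneg fun x _ => F_nonneg ht x

lemma p_zero (i : ℕ) (n : ℕ) : p i (0 : ℝ) n = if n = 0 then 1 else 0 := by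
  rcases Nat.eq_zero_or_pos n with hn | hn
  · subst hn
    have hT : T i 0 = {fun _ => 0} := by
      ext x
      simp only [mem_T, Finset.mem_singleton, w, Finset.sum_eq_zero_iff, Finset.mem_univ,
        true_implies, Nat.mul_eq_zero]
      constructor
      · intro h; funext j; rcases h j with h | h; · omega
        · exact h
      · intro h j; right; rw [h]
    rw [p, hT, Finset.sum_singleton, F]
    simp
  · rw [if_neg hn.ne']
    refine Finset.sum_eq_zero fun x hx => ?_
    have hxne : ∑ j, x j ≠ 0 := by
      intro h0
      have hx0 : ∀ j, x j = 0 := fun j => (Finset.sum_eq_zero_iff.mp h0) j (Finset.mem_univ j)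
      have hw := mem_T.mp hx
      simp only [w] at hw
      rw [Finset.sum_eq_zero (fun j _ => by rw [hx0 j, Nat.mul_zero])] at hw
      omega
    rw [F, zero_pow hxne, zero_div]

lemma add_pow_div_factorial (s t : ℝ) (m : ℕ) :
    (s + t) ^ m / (m.factorial : ℝ) =
      ∑ c ∈ Finset.range (m + 1),
        (s ^ c / (c.factorial : ℝ)) * (t ^ (m - c) / ((m - c).factorial : ℝ)) := by
  rw [add_pow]
  rw [Finset.sum_div]
  refine Finset.sum_congr rfl fun c hc => ?_
  have hcm : c ≤ m := Nat.lt_succ_iff.mp (Finset.mem_range.mp hc)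
  have hfact : (m.choose c : ℝ) * (c.factorial : ℝ) * ((m - c).factorial : ℝ)
      = (m.factorial : ℝ) := by
    rw [← Nat.cast_mul, ← Nat.cast_mul, Nat.choose_mul_factorial_mul_factorial hcm]
  have h1 : (c.factorial : ℝ) ≠ 0 := Nat.cast_ne_zero.mpr (Nat.factorial_ne_zero _)
  have h2 : ((m - c).factorial : ℝ) ≠ 0 := Nat.cast_ne_zero.mpr (Nat.factorial_ne_zero _)
  have h3 : (m.factorial : ℝ) ≠ 0 := Nat.cast_ne_zero.mpr (Nat.factorial_ne_zero _)
  field_simp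
  linear_combination s ^ c * t ^ (m - c) * hfact



lemma conv (i : ℕ) (s t : ℝ) (n : ℕ) :
    ∑ ab ∈ Finset.HasAntidiagonal.antidiagonal n, p i s ab.1 * p i t ab.2 = p i (s + t) n := by
  have key : ∀ z : Fin i → ℕ, F i (s + t) z =
      ∑ x ∈ Fintype.piFinset (fun j => Finset.range (z j + 1)), F i s x * F i t (z - x) := by
    intro z
    rw [F_eq_prod,
      Finset.prod_congr rfl (fun j (_ : j ∈ Finset.univ) => add_pow_div_factorial s t (z j)),
      Finset.prod_univ_sum]
    refine Finset.sum_congr rfl fun x hx => ?_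
    rw [Finset.prod_mul_distrib, F_eq_prod, F_eq_prod]
    congr 1
  calc ∑ ab ∈ Finset.HasAntidiagonal.antidiagonal n, p i s ab.1 * p i t ab.2
      = ∑ q ∈ (Finset.HasAntidiagonal.antidiagonal n).sigma (fun ab => T i ab.1 ×ˢ T i ab.2),
          F i s q.2.1 * F i t q.2.2 := by
        rw [Finset.sum_sigma]
        refine Finset.sum_congr rfl fun ab _ => ?_
        rw [p, p, Finset.sum_mul_sum, ← Finset.sum_product']
    _ = ∑ q ∈ (T i n).sigma (fun z => Fintype.piFinset fun j => Finset.range (z j + 1)),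
          F i s q.2 * F i t (q.1 - q.2) := by
        refine Finset.sum_bij' (fun q _ => ⟨q.2.1 + q.2.2, q.2.1⟩)
          (fun q _ => ⟨(w i q.2, w i (q.1 - q.2)), (q.2, q.1 - q.2)⟩) ?_ ?_ ?_ ?_ ?_
        · rintro ⟨⟨a, b⟩, ⟨x, y⟩⟩ hq
          obtain ⟨hab, hxy⟩ := Finset.mem_sigma.mp hq
          obtain ⟨hx, hy⟩ := Finset.mem_product.mp hxy
          refine Finset.mem_sigma.mpr ⟨mem_T.mpr ?_, Fintype.mem_piFinset.mpr fun j => ?_⟩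
          · rw [w_add, mem_T.mp hx, mem_T.mp hy]
            exact Finset.HasAntidiagonal.mem_antidiagonal.mp hab
          · simp only [Pi.add_apply, Finset.mem_range]
            omega
        · rintro ⟨z, x⟩ hq
          obtain ⟨hz, hx⟩ := Finset.mem_sigma.mp hq
          have hle : ∀ j, x j ≤ z j := by
            intro j
            have h' := Fintype.mem_piFinset.mp hx j
            rw [Finset.mem_range] at h'
            exact Nat.lt_succ_iff.mp h'
          refine Finset.mem_sigma.mpr ⟨Finset.HasAntidiagonal.mem_antidiagonal.mpr ?_,
            Finset.mem_product.mpr ⟨mem_T.mpr rfl, mem_T.mpr rfl⟩⟩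
          rw [w_add_sub hle]
          exact mem_T.mp hz
        · rintro ⟨⟨a, b⟩, ⟨x, y⟩⟩ hq
          obtain ⟨hab, hxy⟩ := Finset.mem_sigma.mp hq
          obtain ⟨hx, hy⟩ := Finset.mem_product.mp hxy
          have hxy' : (x + y) - x = y := by funext j; simp
          simp only [hxy', mem_T.mp hx, mem_T.mp hy]
        · rintro ⟨z, x⟩ hq
          obtain ⟨hz, hx⟩ := Finset.mem_sigma.mp hq
          have hle : ∀ j, x j ≤ z j := by
            intro j
            have h' := Fintype.mem_piFinset.mp hx j
            rw [Finset.mem_range] at h'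
            exact Nat.lt_succ_iff.mp h'
          have hzx : x + (z - x) = z := funext fun j => by
            simp only [Pi.add_apply, Pi.sub_apply]
            exact Nat.add_sub_cancel' (hle j)
          simp only [hzx]
        · rintro ⟨⟨a, b⟩, ⟨x, y⟩⟩ hq
          have hxy' : (x + y) - x = y := by funext j; simp
          simp only [hxy']
    _ = p i (s + t) n := by
        rw [Finset.sum_sigma, p]
        exact Finset.sum_congr rfl fun z _ => (key z).symm

end PoissonOrderAux

open PoissonOrderAux in
/-- Hitting probability of level `k` for the random walk. -/
theorem hitting_probability_order_i_walk
    {Ω : Type*} [MeasurableSpace Ω] (P : Measure Ω) [IsProbabilityMeasure P]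
    (lam : ℝ) (hlam : 0 < lam) (i : ℕ) (hi : 1 ≤ i)
    (B : ℕ → Ω → ℕ)
    (hBmeas : ∀ m, Measurable (B m))
    (hBindep : iIndepFun B P)
    (hBpmf : ∀ m n, P {ω | B m ω = n} =
      ENNReal.ofReal
        (∑ x ∈ (Fintype.piFinset fun _ : Fin i => Finset.range (n + 1)).filter
            (fun x => ∑ j : Fin i, (j.1 + 1) * x j = n),
          Real.exp (-(i * lam)) * lam ^ (∑ j : Fin i, x j) /
            ∏ j : Fin i, ((x j).factorial : ℝ)))
    (V : ℕ → Ω → ℕ)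
    (hV : ∀ n ω, V n ω = ∑ m ∈ Finset.range n, B m ω)
    (k : ℕ) (hk : 1 ≤ k) :
    P {ω | ∃ n ≥ 1, V n ω = k} =
      ENNReal.ofReal
        (∑ h ∈ Finset.Icc 1 k,
          (∑ x ∈ (Fintype.piFinset fun _ : Fin i => Finset.range (k - h + 1)).filter
              (fun x => ∑ j : Fin i, (j.1 + 1) * x j = k - h),
            lam ^ (∑ j : Fin i, x j) / (∏ j : Fin i, ((x j).factorial : ℝ)) *
              ∑' r : ℕ, Real.exp (-(i * lam * r)) * (r : ℝ) ^ (∑ j : Fin i, x j)) *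
          (∑ x ∈ (Fintype.piFinset fun _ : Fin i => Finset.range (h + 1)).filter
              (fun x => ∑ j : Fin i, (j.1 + 1) * x j = h),
            Real.exp (-(i * lam)) * lam ^ (∑ j : Fin i, x j) /
              ∏ j : Fin i, ((x j).factorial : ℝ))) := by
  classical
  -- abbreviations
  set q : ℝ := Real.exp (-(i * lam)) with hqdef
  have hipos : (0:ℝ) < (i : ℝ) * lam :=
    mul_pos (by exact_mod_cast Nat.lt_of_lt_of_le Nat.zero_lt_one hi) hlam
  have hqlt : q < 1 := by
    rw [hqdef, Real.exp_lt_one_iff]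
    linarith
  -- pmf of B in terms of p
  have pmf_eq : ∀ n : ℕ,
      (∑ x ∈ (Fintype.piFinset fun _ : Fin i => Finset.range (n + 1)).filter
          (fun x => ∑ j : Fin i, (j.1 + 1) * x j = n),
        Real.exp (-(i * lam)) * lam ^ (∑ j : Fin i, x j) /
          ∏ j : Fin i, ((x j).factorial : ℝ)) = q * p i lam n := by
    intro n
    rw [p, Finset.mul_sum]
    refine Finset.sum_congr rfl fun x _ => ?_
    rw [F, mul_div_assoc]
  have hBpmf' : ∀ m n, P {ω | B m ω = n} = ENNReal.ofReal (q * p i lam n) := by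
    intro m n
    rw [hBpmf m n, pmf_eq n]
  -- basic facts about V
  have hVsucc : ∀ n ω, V (n + 1) ω = V n ω + B n ω := by
    intro n ω
    rw [hV, hV, Finset.sum_range_succ]
  have hVmeas : ∀ n, Measurable (V n) := by
    intro n
    have : V n = fun ω => ∑ m ∈ Finset.range n, B m ω := funext fun ω => hV n ω
    rw [this]
    exact Finset.measurable_sum _ fun m _ => hBmeas m
  have hmono : ∀ (ω : Ω) {a b : ℕ}, a ≤ b → V a ω ≤ V b ω := by
    intro ω a b hab
    rw [hV, hV]
    exact Finset.sum_le_sum_of_subset (Finset.range_subset_range.mpr hab)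
  -- independence
  have hindep : ∀ n, IndepFun (V n) (B n) P := by
    intro n
    have h := hBindep.indepFun_sum_range_succ hBmeas n
    have hfe : V n = ∑ j ∈ Finset.range n, B j := by
      funext ω
      rw [hV]
      simp [Finset.sum_apply]
    rwa [← hfe] at h
  have hmul : ∀ n a b, P ({ω | V n ω = a} ∩ {ω | B n ω = b})
      = P {ω | V n ω = a} * P {ω | B n ω = b} := by
    intro n a b
    exact (hindep n).measure_inter_preimage_eq_mul {a} {b}
      (measurableSet_singleton a) (measurableSet_singleton b)
  -- pmf of V n
  have hVpmf : ∀ n m, P {ω | V n ω = m}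
      = ENNReal.ofReal (Real.exp (-(i * ((n : ℝ) * lam))) * p i ((n : ℝ) * lam) m) := by
    intro n
    induction n with
    | zero =>
      intro m
      have h0 : ∀ ω, V 0 ω = 0 := fun ω => by rw [hV]; simp
      rcases Nat.eq_zero_or_pos m with hm | hm
      · subst hm
        have huniv : {ω | V 0 ω = 0} = Set.univ := by
          ext ω; simp [h0]
        rw [huniv, measure_univ]
        norm_num [p_zero]
      · have hempty : {ω | V 0 ω = m} = ∅ := by
          ext ω
          simp only [Set.mem_setOf_eq, Set.mem_empty_iff_false, iff_false, h0]
          omega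
        rw [hempty, measure_empty]
        norm_num [p_zero, hm.ne']
    | succ n ih =>
      intro m
      have hsplit : {ω | V (n + 1) ω = m}
          = ⋃ ab ∈ Finset.HasAntidiagonal.antidiagonal m, ({ω | V n ω = ab.1} ∩ {ω | B n ω = ab.2}) := by
        ext ω
        simp only [Set.mem_setOf_eq, Set.mem_iUnion, Set.mem_inter_iff, exists_prop,
          Finset.HasAntidiagonal.mem_antidiagonal]
        constructor
        · intro h
          exact ⟨(V n ω, B n ω), by rw [← h, hVsucc], rfl, rfl⟩
        · rintro ⟨⟨a, b⟩, hab, ha, hb⟩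
          rw [hVsucc, ha, hb, hab]
      have hdisj : Set.PairwiseDisjoint (↑(Finset.HasAntidiagonal.antidiagonal m))
          (fun ab : ℕ × ℕ => {ω | V n ω = ab.1} ∩ {ω | B n ω = ab.2}) := by
        intro ab _ cd _ hne
        simp only [Function.onFun, Set.disjoint_left]
        rintro ω ⟨ha, hb⟩ ⟨hc, hd⟩
        exact hne (Prod.ext (ha.symm.trans hc) (hb.symm.trans hd))
      rw [hsplit, measure_biUnion_finset hdisj (fun ab _ =>
        ((hVmeas n (measurableSet_singleton ab.1)).inter
          (hBmeas n (measurableSet_singleton ab.2))))]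
      have hterm : ∀ ab : ℕ × ℕ, ab ∈ Finset.HasAntidiagonal.antidiagonal m →
          P ({ω | V n ω = ab.1} ∩ {ω | B n ω = ab.2})
          = ENNReal.ofReal ((Real.exp (-(i * ((n : ℝ) * lam))) * p i ((n : ℝ) * lam) ab.1)
              * (q * p i lam ab.2)) := by
        intro ab _
        rw [hmul, ih, hBpmf', ← ENNReal.ofReal_mul
          (mul_nonneg (Real.exp_pos _).le (p_nonneg (by positivity) _))]
      rw [Finset.sum_congr rfl hterm, ← ENNReal.ofReal_sum_of_nonneg (fun ab _ =>
        mul_nonneg (mul_nonneg (Real.exp_pos _).le (p_nonneg (by positivity) _))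
          (mul_nonneg (Real.exp_pos _).le (p_nonneg hlam.le _)))]
      congr 1
      have hrw : ∀ ab : ℕ × ℕ, ab ∈ Finset.HasAntidiagonal.antidiagonal m →
          (Real.exp (-(i * ((n : ℝ) * lam))) * p i ((n : ℝ) * lam) ab.1) * (q * p i lam ab.2)
          = (Real.exp (-(i * ((n : ℝ) * lam))) * q)
              * (p i ((n : ℝ) * lam) ab.1 * p i lam ab.2) := fun ab _ => by ring
      rw [Finset.sum_congr rfl hrw, ← Finset.mul_sum, conv i ((n : ℝ) * lam) lam m]
      have h1 : Real.exp (-(i * ((n : ℝ) * lam))) * q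
          = Real.exp (-(i * (((n : ℕ) + 1 : ℝ)) * lam)) := by
        rw [hqdef, ← Real.exp_add]
        congr 1
        ring
      have h2 : (n : ℝ) * lam + lam = (((n : ℕ) + 1 : ℝ)) * lam := by ring
      rw [h1, h2]
      push_cast
      ring_nf
  -- summability and the Green function
  have hqnorm : ‖q‖ < 1 := by
    rw [Real.norm_eq_abs, abs_of_pos (Real.exp_pos _)]
    exact hqlt
  have hsum0 : ∀ s : ℕ, Summable (fun n : ℕ => (n : ℝ) ^ s * q ^ n) := fun s =>
    summable_pow_mul_geometric_of_norm_lt_one s hqnorm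
  have hgn : ∀ (v n : ℕ), Real.exp (-(i * ((n : ℝ) * lam))) * p i ((n : ℝ) * lam) v
      = ∑ x ∈ T i v, (lam ^ (∑ j, x j) / ∏ j, ((x j).factorial : ℝ))
          * ((n : ℝ) ^ (∑ j, x j) * q ^ n) := by
    intro v n
    have e1 : Real.exp (-(i * ((n : ℝ) * lam))) = q ^ n := by
      rw [hqdef, ← Real.exp_nat_mul]
      congr 1
      ring
    rw [p, Finset.mul_sum]
    refine Finset.sum_congr rfl fun x _ => ?_
    rw [e1, F, mul_pow]
    ring
  have hsumv : ∀ v, Summable (fun n : ℕ =>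
      Real.exp (-(i * ((n : ℝ) * lam))) * p i ((n : ℝ) * lam) v) := by
    intro v
    refine Summable.congr ?_ (fun n => (hgn v n).symm)
    exact summable_sum (fun x _ => ((hsum0 _).mul_left _))
  set Areal : ℕ → ℝ := fun v => ∑ x ∈ T i v,
      lam ^ (∑ j, x j) / (∏ j, ((x j).factorial : ℝ))
        * ∑' r : ℕ, Real.exp (-(i * lam * r)) * (r : ℝ) ^ (∑ j, x j) with hAdef
  have htsumA : ∀ v, (∑' n : ℕ, Real.exp (-(i * ((n : ℝ) * lam))) * p i ((n : ℝ) * lam) v)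
      = Areal v := by
    intro v
    rw [tsum_congr (hgn v), Summable.tsum_finsetSum (fun x _ => ((hsum0 _).mul_left _)), hAdef]
    refine Finset.sum_congr rfl fun x _ => ?_
    rw [tsum_mul_left]
    congr 1
    refine tsum_congr fun r => ?_
    have e1 : Real.exp (-(i * lam * r)) = q ^ r := by
      rw [hqdef, ← Real.exp_nat_mul]
      congr 1
      ring
    rw [e1]
    ring
  have hAnn : ∀ v, 0 ≤ Areal v := by
    intro v
    refine Finset.sum_nonneg fun x _ => mul_nonneg ?_ ?_
    · exact div_nonneg (pow_nonneg hlam.le _)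
        (Finset.prod_nonneg fun j _ => Nat.cast_nonneg _)
    · exact tsum_nonneg fun r => mul_nonneg (Real.exp_pos _).le (pow_nonneg (Nat.cast_nonneg _) _)
  -- decomposition of the hitting event
  set E : ℕ → Set Ω := fun n => {ω | V n ω < k ∧ V (n + 1) ω = k} with hEdef
  have hEmeas : ∀ n, MeasurableSet (E n) := fun n =>
    (hVmeas n measurableSet_Iio).inter (hVmeas (n + 1) (measurableSet_singleton k))
  have hcover : {ω | ∃ n ≥ 1, V n ω = k} = ⋃ n, E n := by
    ext ω
    simp only [hEdef, Set.mem_setOf_eq, Set.mem_iUnion]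
    constructor
    · rintro ⟨m, hm1, hmk⟩
      have hex : ∃ n, ¬ V n ω < k := ⟨m, by omega⟩
      have hn0 : ¬ V (Nat.find hex) ω < k := Nat.find_spec hex
      have hV0 : V 0 ω = 0 := by rw [hV]; simp
      have hpos : 0 < Nat.find hex := by
        rcases Nat.eq_zero_or_pos (Nat.find hex) with h | h
        · exfalso
          apply hn0
          rw [h, hV0]
          omega
        · exact h
      have hle : Nat.find hex ≤ m := Nat.find_le (by omega)
      refine ⟨Nat.find hex - 1, ?_, ?_⟩
      · have := Nat.find_min hex (Nat.sub_lt hpos one_pos)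
        omega
      · have h1 : Nat.find hex - 1 + 1 = Nat.find hex := Nat.succ_pred_eq_of_pos hpos
        rw [h1]
        have h2 : V (Nat.find hex) ω ≤ V m ω := hmono ω hle
        omega
    · rintro ⟨n, _, heq⟩
      exact ⟨n + 1, by omega, heq⟩
  have hEdisj : Pairwise (Function.onFun Disjoint E) := by
    have key : ∀ a b, a < b → Disjoint (E a) (E b) := by
      intro a b hab
      rw [Set.disjoint_left]
      rintro ω ⟨_, heqa⟩ ⟨hltb, _⟩
      have : V (a + 1) ω ≤ V b ω := hmono ω (by omega)
      omega
    intro a b hab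
    rcases hab.lt_or_gt with h | h
    · exact key a b h
    · exact (key b a h).symm
  have hEn : ∀ n, P (E n)
      = ∑ v ∈ Finset.range k, P {ω | V n ω = v} * P {ω | B n ω = k - v} := by
    intro n
    have hsplit : E n = ⋃ v ∈ Finset.range k, ({ω | V n ω = v} ∩ {ω | B n ω = k - v}) := by
      ext ω
      simp only [hEdef, Set.mem_iUnion, Set.mem_inter_iff, Set.mem_setOf_eq, Finset.mem_range,
        exists_prop]
      constructor
      · rintro ⟨hlt, heq⟩
        rw [hVsucc] at heq
        exact ⟨V n ω, hlt, rfl, by omega⟩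
      · rintro ⟨v, hvk, hv, hb⟩
        constructor
        · rw [hv]; exact hvk
        · rw [hVsucc, hv, hb]; omega
    have hdisj : Set.PairwiseDisjoint (↑(Finset.range k))
        (fun v : ℕ => {ω | V n ω = v} ∩ {ω | B n ω = k - v}) := by
      intro a _ b _ hne
      simp only [Function.onFun, Set.disjoint_left]
      rintro ω ⟨ha, _⟩ ⟨hb, _⟩
      exact hne (ha.symm.trans hb)
    rw [hsplit, measure_biUnion_finset hdisj (fun v _ =>
      ((hVmeas n (measurableSet_singleton v)).inter
        (hBmeas n (measurableSet_singleton (k - v)))))]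
    exact Finset.sum_congr rfl fun v _ => hmul n v (k - v)
  -- main computation
  rw [hcover, measure_iUnion hEdisj hEmeas]
  have step1 : ∀ n, P (E n) = ∑ v ∈ Finset.range k,
      ENNReal.ofReal (Real.exp (-(i * ((n : ℝ) * lam))) * p i ((n : ℝ) * lam) v)
        * ENNReal.ofReal (q * p i lam (k - v)) := by
    intro n
    rw [hEn n]
    exact Finset.sum_congr rfl fun v _ => by rw [hVpmf, hBpmf']
  rw [tsum_congr step1, Summable.tsum_finsetSum (fun v _ => ENNReal.summable)]
  have step2 : ∀ v ∈ Finset.range k,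
      (∑' n : ℕ, ENNReal.ofReal (Real.exp (-(i * ((n : ℝ) * lam))) * p i ((n : ℝ) * lam) v)
        * ENNReal.ofReal (q * p i lam (k - v)))
      = ENNReal.ofReal (Areal v * (q * p i lam (k - v))) := by
    intro v _
    rw [ENNReal.tsum_mul_right, ← ENNReal.ofReal_tsum_of_nonneg
      (fun n => mul_nonneg (Real.exp_pos _).le (p_nonneg (by positivity) _)) (hsumv v),
      htsumA v, ← ENNReal.ofReal_mul (hAnn v)]
  rw [Finset.sum_congr rfl step2, ← ENNReal.ofReal_sum_of_nonneg (fun v _ =>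
    mul_nonneg (hAnn v) (mul_nonneg (Real.exp_pos _).le (p_nonneg hlam.le _)))]
  congr 1
  refine Finset.sum_nbij' (fun v => k - v) (fun h => k - h) ?_ ?_ ?_ ?_ ?_
  · intro v hv
    rw [Finset.mem_range] at hv
    rw [Finset.mem_Icc]
    omega
  · intro h hh
    rw [Finset.mem_Icc] at hh
    rw [Finset.mem_range]
    omega
  · intro v hv
    rw [Finset.mem_range] at hv
    omega
  · intro h hh
    rw [Finset.mem_Icc] at hh
    omega
  · intro v hv
    rw [Finset.mem_range] at hv
    rw [Nat.sub_sub_self (Nat.le_of_lt hv)]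
    congr 1
    exact (pmf_eq (k - v)).symm
end
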